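/- In the regular 7-gon inscribed in the unit circle with edge e_7 = 2·sin(π/7), the number x = (2·sin(π/7)·(1+sin(π/7)))/(1 + 2·sin(π/7) + sin(π/14)) satisfies the equation e_7 + ‖V_2 − (x,0)‖ = 2·e_7 + (1 − x), where V_2 = (cos(4π/7), sin(4π/7)). -/

import Mathlib

noncomputable def pt (x y : ℝ) : EuclideanSpace ℝ (Fin 2) := WithLp.toLp 2 ![x, y]

/-- In the regular 7-gon inscribed in the unit circle with edge `e₇ = 2 sin(π/7)`, the
number `x = 2 sin(π/7)(1+sin(π/7)) / (1 + 2 sin(π/7) + sin(π/14))` satisfies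
`e₇ + ‖V₂ − (x,0)‖ = 2e₇ + (1 − x)`, where `V₂ = (cos(4π/7), sin(4π/7))`. -/
theorem heptagon_two_servants_eq :
    let e₇ : ℝ := 2 * Real.sin (Real.pi / 7)
    let x : ℝ := (2 * Real.sin (Real.pi / 7) * (1 + Real.sin (Real.pi / 7))) /
      (1 + 2 * Real.sin (Real.pi / 7) + Real.sin (Real.pi / 14))
    let V₂ := pt (Real.cos (4 * Real.pi / 7)) (Real.sin (4 * Real.pi / 7))
    e₇ + dist V₂ (pt x 0) = 2 * e₇ + (1 - x) := by
  have hpi := Real.pi_pos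
  set s := Real.sin (Real.pi / 7) with hs_def
  set t := Real.sin (Real.pi / 14) with ht_def
  intro e₇ x V₂
  have hs : 0 < s := Real.sin_pos_of_pos_of_lt_pi (by linarith) (by linarith)
  have ht : 0 < t := Real.sin_pos_of_pos_of_lt_pi (by linarith) (by linarith)
  have hc : Real.cos (4 * Real.pi / 7) = -t := by
    have h : (4 : ℝ) * Real.pi / 7 = Real.pi / 14 + Real.pi / 2 := by ring
    rw [h, Real.cos_add_pi_div_two]
  have hden : (0:ℝ) < 1 + 2 * s + t := by linarith
  have hx : x = 2 * s * (1 + s) / (1 + 2 * s + t) := rfl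
  have hxle : x ≤ 1 + e₇ := by
    rw [hx, div_le_iff₀ hden]
    show (2:ℝ) * s * (1 + s) ≤ (1 + 2 * s) * (1 + 2 * s + t)
    nlinarith
  have hd : dist V₂ (pt x 0) =
      Real.sqrt ((Real.cos (4 * Real.pi / 7) - x) ^ 2 + Real.sin (4 * Real.pi / 7) ^ 2) := by
    rw [EuclideanSpace.dist_eq]
    congr 1
    rw [Fin.sum_univ_two]
    simp [V₂, pt, Real.dist_eq, sq_abs]
  have hpyth := Real.sin_sq_add_cos_sq (4 * Real.pi / 7)
  have hkey : (Real.cos (4 * Real.pi / 7) - x) ^ 2 + Real.sin (4 * Real.pi / 7) ^ 2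
      = (e₇ + 1 - x) ^ 2 := by
    have hsin2 : Real.sin (4 * Real.pi / 7) ^ 2 = 1 - t ^ 2 := by nlinarith [hpyth, hc]
    have he : e₇ = 2 * s := rfl
    rw [hx, he, hc, hsin2]
    field_simp
    ring
  rw [hd, hkey, Real.sqrt_sq (by linarith)]
  ring
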